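/- Let Δ₊ be symmetric positive definite (size n₊), Δ₋ symmetric negative definite (size n₋), and R an n₋×n₊ matrix. If C_R := −Δ₊ − Rᵀ Δ₋ R is negative semidefinite, then C̃_R := Δ₋ + Δ₋ R Δ₊⁻¹ Rᵀ Δ₋ is negative semidefinite. -/

import Mathlib

open Matrix

/-- if `C_R = −Δ₊ − Rᵀ Δ₋ R` is negative semidefinite, then
`C̃_R = Δ₋ + Δ₋ R Δ₊⁻¹ Rᵀ Δ₋` is negative semidefinite. -/
theorem stmt_2 {np nm : ℕ}
    (Δp : Matrix (Fin np) (Fin np) ℝ) (Δm : Matrix (Fin nm) (Fin nm) ℝ)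
    (hΔp : Δp.PosDef) (hΔm : (-Δm).PosDef)
    (R : Matrix (Fin nm) (Fin np) ℝ)
    (hCR : (-(-Δp - Rᵀ * Δm * R)).PosSemidef) :
    (-(Δm + Δm * R * Δp⁻¹ * Rᵀ * Δm)).PosSemidef := by
  haveI := hΔp.isUnit.invertible
  haveI := hΔm.isUnit.invertible
  have hherm : Δmᴴ = Δm := by
    have h := hΔm.1
    rwa [IsHermitian, conjTranspose_neg, neg_inj] at h
  set B : Matrix (Fin np) (Fin nm) ℝ := Rᵀ * (-Δm) with hBdef
  have htr : Δmᵀ = Δm := by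
    ext i j
    conv_rhs => rw [← hherm]
    simp [conjTranspose_apply]
  have hBH : Bᴴ = (-Δm) * R := by
    simp [hBdef, conjTranspose_mul, conjTranspose_neg, hherm, htr]
  have h1 : (fromBlocks Δp B Bᴴ (-Δm)).PosSemidef := by
    rw [PosDef.fromBlocks₂₂ Δp B hΔm]
    have heq : Δp - B * (-Δm)⁻¹ * Bᴴ = -(-Δp - Rᵀ * Δm * R) := by
      rw [hBH, hBdef, Matrix.mul_assoc, ← Matrix.mul_assoc (-Δm)⁻¹,
        Matrix.inv_mul_of_invertible, Matrix.one_mul]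
      simp [Matrix.mul_neg, Matrix.neg_mul, sub_neg_eq_add, neg_sub, Matrix.mul_assoc]
      abel
    rw [heq]
    exact hCR
  have h2 := (PosDef.fromBlocks₁₁ B (-Δm) hΔp).mp h1
  have heq2 : -Δm - Bᴴ * Δp⁻¹ * B = -(Δm + Δm * R * Δp⁻¹ * Rᵀ * Δm) := by
    rw [hBH, hBdef]
    simp [Matrix.mul_neg, Matrix.neg_mul, sub_neg_eq_add, neg_add, Matrix.mul_assoc]
    abel
  rwa [heq2] at h2
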